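/- Let v₁ ∈ C²([a,b]) and v₂ ∈ C¹([a,b]) be strictly positive functions, and let u ∈ C⁴([a,b]) satisfy u(a) = u(b) = u''(a) = u''(b) = 0 and v₁(t)v₂(t) · d/dt( (1/v₂(t)) · d/dt( u''(t)/v₁(t) ) ) ≥ 0 on [a,b], not identically zero. Then u(t) > 0 for all t ∈ (a,b), u'(a) > 0, and u'(b) < 0. -/
import Mathlib


open Set


lemma myMono {p q : ℝ} {f f' : ℝ → ℝ}
    (hf : ∀ t ∈ Icc p q, HasDerivWithinAt f (f' t) (Icc p q) t)
    (h0 : ∀ t ∈ Ioo p q, 0 ≤ f' t) : MonotoneOn f (Icc p q) := by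
  apply monotoneOn_of_deriv_nonneg (convex_Icc p q)
    (fun t ht => (hf t ht).continuousWithinAt)
  · intro x hx
    rw [interior_Icc] at hx
    exact (((hf x (Ioo_subset_Icc_self hx)).hasDerivAt
      (Icc_mem_nhds hx.1 hx.2)).differentiableAt).differentiableWithinAt
  · intro x hx
    rw [interior_Icc] at hx
    rw [((hf x (Ioo_subset_Icc_self hx)).hasDerivAt (Icc_mem_nhds hx.1 hx.2)).deriv]
    exact h0 x hx

lemma myAnti {p q : ℝ} {f f' : ℝ → ℝ}
    (hf : ∀ t ∈ Icc p q, HasDerivWithinAt f (f' t) (Icc p q) t)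
    (h0 : ∀ t ∈ Ioo p q, f' t ≤ 0) : AntitoneOn f (Icc p q) := by
  apply antitoneOn_of_deriv_nonpos (convex_Icc p q)
    (fun t ht => (hf t ht).continuousWithinAt)
  · intro x hx
    rw [interior_Icc] at hx
    exact (((hf x (Ioo_subset_Icc_self hx)).hasDerivAt
      (Icc_mem_nhds hx.1 hx.2)).differentiableAt).differentiableWithinAt
  · intro x hx
    rw [interior_Icc] at hx
    rw [((hf x (Ioo_subset_Icc_self hx)).hasDerivAt (Icc_mem_nhds hx.1 hx.2)).deriv]
    exact h0 x hx

lemma myStrictMono {p q : ℝ} {f f' : ℝ → ℝ}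
    (hf : ∀ t ∈ Icc p q, HasDerivWithinAt f (f' t) (Icc p q) t)
    (h0 : ∀ t ∈ Ioo p q, 0 < f' t) : StrictMonoOn f (Icc p q) := by
  apply strictMonoOn_of_deriv_pos (convex_Icc p q)
    (fun t ht => (hf t ht).continuousWithinAt)
  intro x hx
  rw [interior_Icc] at hx
  rw [((hf x (Ioo_subset_Icc_self hx)).hasDerivAt (Icc_mem_nhds hx.1 hx.2)).deriv]
  exact h0 x hx

lemma myStrictAnti {p q : ℝ} {f f' : ℝ → ℝ}
    (hf : ∀ t ∈ Icc p q, HasDerivWithinAt f (f' t) (Icc p q) t)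
    (h0 : ∀ t ∈ Ioo p q, f' t < 0) : StrictAntiOn f (Icc p q) := by
  apply strictAntiOn_of_deriv_neg (convex_Icc p q)
    (fun t ht => (hf t ht).continuousWithinAt)
  intro x hx
  rw [interior_Icc] at hx
  rw [((hf x (Ioo_subset_Icc_self hx)).hasDerivAt (Icc_mem_nhds hx.1 hx.2)).deriv]
  exact h0 x hx

lemma myDerivZero {p q : ℝ} (hpq : p < q) {f f' : ℝ → ℝ}
    (hf : ∀ t ∈ Icc p q, HasDerivWithinAt f (f' t) (Icc p q) t)
    (hconst : ∀ t ∈ Icc p q, f t = 0) : ∀ t ∈ Icc p q, f' t = 0 := by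
  intro t ht
  have h2 : HasDerivWithinAt (fun _ => (0:ℝ)) (f' t) (Icc p q) t :=
    (hf t ht).congr (fun s hs => (hconst s hs).symm) (hconst t ht).symm
  have e1 := h2.derivWithin (uniqueDiffOn_Icc hpq t ht)
  have e2 := (hasDerivWithinAt_const t (Icc p q) (0:ℝ)).derivWithin (uniqueDiffOn_Icc hpq t ht)
  exact e1.symm.trans e2

/-- Strong inverse positivity for the disconjugate operator in Pólya factored form
`T[0]u = v₁ v₂ (1/v₂ (u''/v₁)')'` with `v₁, v₂ > 0`, under simply supported beam
boundary conditions. Here `g = u''/v₁`, `g1 = g'`, `h = g1/v₂`, `h1 = h'`, so that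
`T[0]u(t) = v₁(t) v₂(t) h1(t)`. -/
theorem stmt4 (a b : ℝ) (hab : a < b) (v1 v2 : ℝ → ℝ)
    (hv1 : ContDiffOn ℝ 2 v1 (Icc a b)) (hv2 : ContDiffOn ℝ 1 v2 (Icc a b))
    (hv1pos : ∀ t ∈ Icc a b, 0 < v1 t) (hv2pos : ∀ t ∈ Icc a b, 0 < v2 t)
    (u u1 u2 u3 u4 : ℝ → ℝ)
    (hd1 : ∀ t ∈ Icc a b, HasDerivWithinAt u (u1 t) (Icc a b) t)
    (hd2 : ∀ t ∈ Icc a b, HasDerivWithinAt u1 (u2 t) (Icc a b) t)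
    (hd3 : ∀ t ∈ Icc a b, HasDerivWithinAt u2 (u3 t) (Icc a b) t)
    (hd4 : ∀ t ∈ Icc a b, HasDerivWithinAt u3 (u4 t) (Icc a b) t)
    (hcont : ContinuousOn u4 (Icc a b))
    (g1 h1 : ℝ → ℝ)
    (hg1 : ∀ t ∈ Icc a b, HasDerivWithinAt (fun s => u2 s / v1 s) (g1 t) (Icc a b) t)
    (hh1 : ∀ t ∈ Icc a b, HasDerivWithinAt (fun s => g1 s / v2 s) (h1 t) (Icc a b) t)
    (hconth1 : ContinuousOn h1 (Icc a b))
    (hua : u a = 0) (hub : u b = 0) (hu2a : u2 a = 0) (hu2b : u2 b = 0)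
    (hpos : ∀ t ∈ Icc a b, 0 ≤ v1 t * v2 t * h1 t)
    (hne : ∃ t ∈ Icc a b, v1 t * v2 t * h1 t ≠ 0) :
    (∀ t ∈ Ioo a b, 0 < u t) ∧ 0 < u1 a ∧ u1 b < 0 := by
  set g : ℝ → ℝ := fun s => u2 s / v1 s with hgdef
  set h : ℝ → ℝ := fun s => g1 s / v2 s with hhdef
  have hv1ne : ∀ t ∈ Icc a b, v1 t ≠ 0 := fun t ht => (hv1pos t ht).ne'
  have hv2ne : ∀ t ∈ Icc a b, v2 t ≠ 0 := fun t ht => (hv2pos t ht).ne'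
  have hamem : a ∈ Icc a b := ⟨le_refl _, hab.le⟩
  have hbmem : b ∈ Icc a b := ⟨hab.le, le_refl _⟩
  have hh1nn : ∀ t ∈ Icc a b, 0 ≤ h1 t := by
    intro t ht
    have hv := mul_pos (hv1pos t ht) (hv2pos t ht)
    nlinarith [hpos t ht]
  have hg1eq : ∀ t ∈ Icc a b, g1 t = h t * v2 t := by
    intro t ht
    rw [hhdef]
    exact (div_mul_cancel₀ (g1 t) (hv2ne t ht)).symm
  obtain ⟨t₀, ht₀, ht₀ne⟩ := hne
  have h1t₀ : 0 < h1 t₀ := by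
    rcases (hh1nn t₀ ht₀).lt_or_eq with hx | hx
    · exact hx
    · exfalso; apply ht₀ne; rw [← hx]; ring
  have hev : ∀ᶠ y in nhdsWithin t₀ (Icc a b), 0 < h1 y :=
    (hconth1 t₀ ht₀).eventually (eventually_gt_nhds h1t₀)
  rw [eventually_nhdsWithin_iff, Metric.eventually_nhds_iff] at hev
  obtain ⟨ε, hε, hball⟩ := hev
  set p := max a (t₀ - ε/2) with hpdef
  set q := min b (t₀ + ε/2) with hqdef
  have hap : a ≤ p := le_max_left _ _
  have hqb : q ≤ b := min_le_left _ _
  have hsub : Icc p q ⊆ Icc a b := Icc_subset_Icc hap hqb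
  have hpq : p < q := by
    rcases ht₀.1.eq_or_lt with heq | hlt
    · have hp : p = a := by
        rw [hpdef, max_eq_left]; linarith
      rw [hp, hqdef]
      exact lt_min hab (by linarith)
    · calc p < t₀ := max_lt hlt (by linarith)
        _ ≤ q := le_min ht₀.2 (by linarith)
  have hh1posInt : ∀ t ∈ Icc p q, 0 < h1 t := by
    intro t ht
    have hdist : dist t t₀ < ε := by
      rw [Real.dist_eq, abs_sub_lt_iff]
      constructor
      · have h2 : t ≤ t₀ + ε/2 := le_trans ht.2 (min_le_right b (t₀ + ε/2))
        linarith
      · have h2 : t₀ - ε/2 ≤ t := le_trans (le_max_right a (t₀ - ε/2)) ht.1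
        linarith
    exact hball hdist (hsub ht)
  have hmono : MonotoneOn h (Icc a b) :=
    myMono hh1 (fun t ht => hh1nn t (Ioo_subset_Icc_self ht))
  have hstrict : StrictMonoOn h (Icc p q) :=
    myStrictMono (fun t ht => (hh1 t (hsub ht)).mono hsub)
      (fun t ht => hh1posInt t (Ioo_subset_Icc_self ht))
  have hpmem : p ∈ Icc p q := ⟨le_refl _, hpq.le⟩
  have hqmem : q ∈ Icc p q := ⟨hpq.le, le_refl _⟩
  have hhpq : h p < h q := hstrict hpmem hqmem hpq
  have hga : g a = 0 := by rw [hgdef]; simp [hu2a]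
  have hgb : g b = 0 := by rw [hgdef]; simp [hu2b]
  have hgz : ∀ x y, a ≤ x → x < y → y ≤ b → (∀ s ∈ Icc x y, g s = 0) →
      ∀ s ∈ Icc x y, h s = 0 := by
    intro x y hax hxy hyb hzero s hs
    have hsub2 : Icc x y ⊆ Icc a b := Icc_subset_Icc hax hyb
    have hz := myDerivZero hxy (fun t ht => (hg1 t (hsub2 ht)).mono hsub2) hzero s hs
    rw [hhdef]; simp [hz]
  have hhaneg : h a < 0 := by
    by_contra hcon
    push_neg at hcon
    have hgmono : MonotoneOn g (Icc a b) := by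
      apply myMono hg1
      intro t ht
      rw [hg1eq t (Ioo_subset_Icc_self ht)]
      exact mul_nonneg (le_trans hcon (hmono hamem (Ioo_subset_Icc_self ht) ht.1.le))
        (hv2pos t (Ioo_subset_Icc_self ht)).le
    have hzero : ∀ s ∈ Icc a b, g s = 0 := by
      intro s hs
      have h1' := hgmono hamem hs hs.1
      have h2' := hgmono hs hbmem hs.2
      rw [hga] at h1'; rw [hgb] at h2'; linarith
    have hz := hgz a b le_rfl hab le_rfl hzero
    have hp0 := hz p (hsub hpmem)
    have hq0 := hz q (hsub hqmem)
    rw [hp0, hq0] at hhpq; exact lt_irrefl 0 hhpq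
  have hhbpos : 0 < h b := by
    by_contra hcon
    push_neg at hcon
    have hganti : AntitoneOn g (Icc a b) := by
      apply myAnti hg1
      intro t ht
      rw [hg1eq t (Ioo_subset_Icc_self ht)]
      refine mul_nonpos_iff.mpr (Or.inr ⟨?_, (hv2pos t (Ioo_subset_Icc_self ht)).le⟩)
      exact le_trans (hmono (Ioo_subset_Icc_self ht) hbmem ht.2.le) hcon
    have hzero : ∀ s ∈ Icc a b, g s = 0 := by
      intro s hs
      have h1' := hganti hamem hs hs.1
      have h2' := hganti hs hbmem hs.2
      rw [hga] at h1'; rw [hgb] at h2'; linarith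
    have hz := hgz a b le_rfl hab le_rfl hzero
    have hp0 := hz p (hsub hpmem)
    have hq0 := hz q (hsub hqmem)
    rw [hp0, hq0] at hhpq; exact lt_irrefl 0 hhpq
  have hconth : ContinuousOn h (Icc a b) := fun t ht => (hh1 t ht).continuousWithinAt
  obtain ⟨c, hcmem, hc0⟩ := intermediate_value_Icc hab.le hconth ⟨hhaneg.le, hhbpos.le⟩
  have hac : a < c := by
    rcases hcmem.1.eq_or_lt with heq | hx
    · exfalso; rw [← heq] at hc0; rw [hc0] at hhaneg; exact lt_irrefl 0 hhaneg
    · exact hx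
  have hcb : c < b := by
    rcases hcmem.2.eq_or_lt with heq | hx
    · exfalso; rw [heq] at hc0; rw [hc0] at hhbpos; exact lt_irrefl 0 hhbpos
    · exact hx
  have hgneg : ∀ t ∈ Ioo a b, g t < 0 := by
    intro t ht
    rcases le_or_gt t c with htc | hct
    · have hsubc : Icc a c ⊆ Icc a b := Icc_subset_Icc le_rfl hcmem.2
      have hanti : AntitoneOn g (Icc a c) := by
        apply myAnti (fun s hs => (hg1 s (hsubc hs)).mono hsubc)
        intro s hs
        rw [hg1eq s (hsubc (Ioo_subset_Icc_self hs))]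
        refine mul_nonpos_iff.mpr (Or.inr ⟨?_, (hv2pos s (hsubc (Ioo_subset_Icc_self hs))).le⟩)
        have hm := hmono (hsubc (Ioo_subset_Icc_self hs)) hcmem hs.2.le
        rw [hc0] at hm; exact hm
      have htmem : t ∈ Icc a c := ⟨ht.1.le, htc⟩
      have hle : g t ≤ 0 := by
        have hm := hanti ⟨le_rfl, hac.le⟩ htmem ht.1.le
        rw [hga] at hm; exact hm
      rcases hle.lt_or_eq with hx | hx
      · exact hx
      · exfalso
        have hzero : ∀ s ∈ Icc a t, g s = 0 := by
          intro s hs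
          have hsmem : s ∈ Icc a c := ⟨hs.1, le_trans hs.2 htc⟩
          have h1' := hanti ⟨le_rfl, hac.le⟩ hsmem hs.1
          have h2' := hanti hsmem htmem hs.2
          rw [hga] at h1'; rw [hx] at h2'; linarith
        have hz := hgz a t le_rfl ht.1 ht.2.le hzero a ⟨le_rfl, ht.1.le⟩
        rw [hz] at hhaneg; exact lt_irrefl 0 hhaneg
    · have hsubc : Icc c b ⊆ Icc a b := Icc_subset_Icc hcmem.1 le_rfl
      have hmon : MonotoneOn g (Icc c b) := by
        apply myMono (fun s hs => (hg1 s (hsubc hs)).mono hsubc)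
        intro s hs
        rw [hg1eq s (hsubc (Ioo_subset_Icc_self hs))]
        refine mul_nonneg ?_ (hv2pos s (hsubc (Ioo_subset_Icc_self hs))).le
        have hm := hmono hcmem (hsubc (Ioo_subset_Icc_self hs)) hs.1.le
        rw [hc0] at hm; exact hm
      have htmem : t ∈ Icc c b := ⟨hct.le, ht.2.le⟩
      have hle : g t ≤ 0 := by
        have hm := hmon htmem ⟨hcb.le, le_rfl⟩ ht.2.le
        rw [hgb] at hm; exact hm
      rcases hle.lt_or_eq with hx | hx
      · exact hx
      · exfalso
        have hzero : ∀ s ∈ Icc t b, g s = 0 := by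
          intro s hs
          have hsmem : s ∈ Icc c b := ⟨le_trans hct.le hs.1, hs.2⟩
          have h1' := hmon htmem hsmem hs.1
          have h2' := hmon hsmem ⟨hcb.le, le_rfl⟩ hs.2
          rw [hgb] at h2'; rw [hx] at h1'; linarith
        have hz := hgz t b ht.1.le ht.2 le_rfl hzero b ⟨ht.2.le, le_rfl⟩
        rw [hz] at hhbpos; exact lt_irrefl 0 hhbpos
  have hu2neg : ∀ t ∈ Ioo a b, u2 t < 0 := by
    intro t ht
    have hg : u2 t / v1 t < 0 := hgneg t ht
    have hv := hv1pos t (Ioo_subset_Icc_self ht)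
    rcases div_neg_iff.mp hg with ⟨_, hb2⟩ | ⟨ha2, _⟩
    · linarith
    · exact ha2
  have hu1anti : StrictAntiOn u1 (Icc a b) := myStrictAnti hd2 hu2neg
  have hu1a : 0 < u1 a := by
    by_contra hcon
    push_neg at hcon
    have huanti : StrictAntiOn u (Icc a b) := by
      apply myStrictAnti hd1
      intro t ht
      have hm := hu1anti hamem (Ioo_subset_Icc_self ht) ht.1
      linarith
    have hm := huanti hamem hbmem hab
    rw [hua, hub] at hm; exact lt_irrefl 0 hm
  have hu1b : u1 b < 0 := by
    by_contra hcon
    push_neg at hcon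
    have humono : StrictMonoOn u (Icc a b) := by
      apply myStrictMono hd1
      intro t ht
      have hm := hu1anti (Ioo_subset_Icc_self ht) hbmem ht.2
      linarith
    have hm := humono hamem hbmem hab
    rw [hua, hub] at hm; exact lt_irrefl 0 hm
  have hu1cont : ContinuousOn u1 (Icc a b) := fun t ht => (hd2 t ht).continuousWithinAt
  obtain ⟨d, hdmem, hd0⟩ := intermediate_value_Icc' hab.le hu1cont ⟨hu1b.le, hu1a.le⟩
  have had : a < d := by
    rcases hdmem.1.eq_or_lt with heq | hx
    · exfalso; rw [← heq] at hd0; rw [hd0] at hu1a; exact lt_irrefl 0 hu1a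
    · exact hx
  have hdb : d < b := by
    rcases hdmem.2.eq_or_lt with heq | hx
    · exfalso; rw [heq] at hd0; rw [hd0] at hu1b; exact lt_irrefl 0 hu1b
    · exact hx
  refine ⟨?_, hu1a, hu1b⟩
  intro t ht
  rcases le_or_gt t d with htd | hdt
  · have hsubd : Icc a d ⊆ Icc a b := Icc_subset_Icc le_rfl hdmem.2
    have humono : StrictMonoOn u (Icc a d) := by
      apply myStrictMono (fun s hs => (hd1 s (hsubd hs)).mono hsubd)
      intro s hs
      have hm := hu1anti (hsubd (Ioo_subset_Icc_self hs)) hdmem hs.2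
      rw [hd0] at hm; linarith
    have hm := humono ⟨le_rfl, had.le⟩ ⟨ht.1.le, htd⟩ ht.1
    rw [hua] at hm; exact hm
  · have hsubd : Icc d b ⊆ Icc a b := Icc_subset_Icc hdmem.1 le_rfl
    have huanti : StrictAntiOn u (Icc d b) := by
      apply myStrictAnti (fun s hs => (hd1 s (hsubd hs)).mono hsubd)
      intro s hs
      have hm := hu1anti hdmem (hsubd (Ioo_subset_Icc_self hs)) hs.1
      rw [hd0] at hm; linarith
    have hm := huanti ⟨hdt.le, ht.2.le⟩ ⟨hdb.le, le_rfl⟩ ht.2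
    rw [hub] at hm; exact hm
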